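/- In the bipartite MPEMC setting, let J ⊆ E and let F be obtained by picking, for each b ∈ B, r_J(b) = max{r(b) − d_J(b), 0} cheapest edges of E∖J incident to b. Then J∪F is an r-edge cover, p_F(B) ≤ opt, and p_F(A) ≤ R_J where R_J = ∑_{b∈B} w_b · r_J(b). Moreover R_J ≤ k·opt where k = max_b r(b). -/

import Mathlib

open Finset

variable {V : Type*} [Fintype V] [DecidableEq V]

/-- The set of edges of `J` incident to the node `v`. -/
def inc (J : Finset (Sym2 V)) (v : V) : Finset (Sym2 V) := J.filter (fun e => v ∈ e)

/-- The power of the node `v` w.r.t. the edge set `J`: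
the maximum cost of an edge of `J` incident to `v` (`0` if `v` is isolated). -/
def pw (c : Sym2 V → NNReal) (J : Finset (Sym2 V)) (v : V) : NNReal := (inc J v).sup c

/-- The degree of the node `v` in the graph `(V, J)`. -/
def deg (J : Finset (Sym2 V)) (v : V) : ℕ := (inc J v).card

/-- Bipartite MPEMC: given `J ⊆ E`, let `F` be obtained by picking for each `b ∈ B`
the `r_J(b) = max{r b − d_J(b), 0}` cheapest edges of `E \ J` incident to `b`.
Then `J ∪ F` is an `r`-edge cover, `p_F(B) ≤ opt`, `p_F(A) ≤ R_J`, and `R_J ≤ k·opt`,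
where `R_J = ∑_{b∈B} w b · r_J(b)` and `opt` is the power of any `r`-edge cover `I`. -/
theorem stmt4 (A B : Finset V) (hpart : A ∪ B = Finset.univ) (hdisj : Disjoint A B)
    (E : Finset (Sym2 V)) (c : Sym2 V → NNReal)
    (hbip : ∀ e ∈ E, ∃ a ∈ A, ∃ b ∈ B, e = s(a, b))
    (r : V → ℕ) (hrA : ∀ a ∈ A, r a = 0)
    (k : ℕ) (hk : k = Finset.univ.sup r)
    (w : V → NNReal)
    (hne : ∀ b ∈ B, ((inc E b).powersetCard (r b)).Nonempty)
    (hw : ∀ b, ∀ hb : b ∈ B,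
      w b = ((inc E b).powersetCard (r b)).inf' (hne b hb) (fun T => T.sup c))
    (J : Finset (Sym2 V)) (hJE : J ⊆ E)
    (SF : V → Finset (Sym2 V))
    (hSsub : ∀ b ∈ B, SF b ⊆ inc (E \ J) b)
    (hScard : ∀ b ∈ B, (SF b).card = r b - deg J b)
    (hScheap : ∀ b ∈ B, ∀ e ∈ SF b, ∀ f ∈ inc (E \ J) b \ SF b, c e ≤ c f)
    (F : Finset (Sym2 V)) (hF : F = B.biUnion SF) :
    (∀ b ∈ B, r b ≤ deg (J ∪ F) b) ∧
      ∀ I ⊆ E, (∀ b ∈ B, r b ≤ deg I b) →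
        (∑ b ∈ B, pw c F b ≤ ∑ v, pw c I v) ∧
        (∑ a ∈ A, pw c F a ≤ ∑ b ∈ B, w b * ((r b - deg J b : ℕ) : NNReal)) ∧
        ∑ b ∈ B, w b * ((r b - deg J b : ℕ) : NNReal) ≤ (k : NNReal) * ∑ v, pw c I v := by
  -- endpoints in B are unique
  have hBend : ∀ e ∈ E, ∀ x ∈ B, ∀ y ∈ B, x ∈ e → y ∈ e → x = y := by
    intro e he x hx y hy hxe hye
    obtain ⟨a, ha, b, hb, rfl⟩ := hbip e he
    rw [Sym2.mem_iff] at hxe hye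
    have hxb : x = b := by
      rcases hxe with h | h
      · exact absurd hx (by subst h; exact Finset.disjoint_left.mp hdisj ha)
      · exact h
    have hyb : y = b := by
      rcases hye with h | h
      · exact absurd hy (by subst h; exact Finset.disjoint_left.mp hdisj ha)
      · exact h
    rw [hxb, hyb]
  have hAend : ∀ e ∈ E, ∀ x ∈ A, ∀ y ∈ A, x ∈ e → y ∈ e → x = y := by
    intro e he x hx y hy hxe hye
    obtain ⟨a, ha, b, hb, rfl⟩ := hbip e he
    rw [Sym2.mem_iff] at hxe hye
    have hxb : x = a := by
      rcases hxe with h | h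
      · exact h
      · exact absurd hx (by subst h; exact Finset.disjoint_right.mp hdisj hb)
    have hyb : y = a := by
      rcases hye with h | h
      · exact h
      · exact absurd hy (by subst h; exact Finset.disjoint_right.mp hdisj hb)
    rw [hxb, hyb]
  have hSE : ∀ b ∈ B, ∀ e ∈ SF b, e ∈ E ∧ e ∉ J ∧ b ∈ e := by
    intro b hb e he
    have := hSsub b hb he
    simp only [inc, Finset.mem_filter, Finset.mem_sdiff] at this
    exact ⟨this.1.1, this.1.2, this.2⟩
  have hFE : F ⊆ E := by
    intro e he
    rw [hF, Finset.mem_biUnion] at he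
    obtain ⟨b, hb, he⟩ := he
    exact (hSE b hb e he).1
  -- incidence of F at a vertex of B is exactly SF b
  have hFb : ∀ b ∈ B, inc F b = SF b := by
    intro b hb
    apply Finset.Subset.antisymm
    · intro e he
      simp only [inc, Finset.mem_filter, hF, Finset.mem_biUnion] at he
      obtain ⟨⟨b', hb', he'⟩, hbe⟩ := he
      obtain ⟨heE, _, hb'e⟩ := hSE b' hb' e he'
      have : b = b' := hBend e heE b hb b' hb' hbe hb'e
      rw [this]; exact he'
    · intro e he
      obtain ⟨heE, _, hbe⟩ := hSE b hb e he
      simp only [inc, Finset.mem_filter, hF, Finset.mem_biUnion]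
      exact ⟨⟨b, hb, he⟩, hbe⟩
  -- the max of SF b is at most w b
  have hsupSF : ∀ b ∈ B, (SF b).sup c ≤ w b := by
    intro b hb
    rw [hw b hb]
    apply Finset.le_inf'
    intro T hT
    rw [Finset.mem_powersetCard] at hT
    obtain ⟨hTsub, hTcard⟩ := hT
    by_cases hcase : T \ J ⊆ SF b
    · -- then SF b = T \ J ⊆ T
      have h1 : (T ∩ J).card ≤ deg J b := by
        apply Finset.card_le_card
        intro e he
        rw [Finset.mem_inter] at he
        have := hTsub he.1
        simp only [inc, Finset.mem_filter] at this ⊢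
        exact ⟨he.2, this.2⟩
      have h2 : (T \ J).card + (T ∩ J).card = T.card := Finset.card_sdiff_add_card_inter T J
      have hle : (SF b).card ≤ (T \ J).card := by
        rw [hScard b hb]; omega
      have : T \ J = SF b := Finset.eq_of_subset_of_card_le hcase hle
      apply Finset.sup_mono
      rw [← this]
      exact Finset.sdiff_subset
    · obtain ⟨f, hfT, hfS⟩ := Finset.not_subset.mp hcase
      rw [Finset.mem_sdiff] at hfT
      have hfinc : f ∈ inc (E \ J) b \ SF b := by
        have := hTsub hfT.1
        simp only [inc, Finset.mem_filter, Finset.mem_sdiff] at this ⊢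
        exact ⟨⟨⟨this.1, hfT.2⟩, this.2⟩, hfS⟩
      apply Finset.sup_le
      intro e he
      exact le_trans (hScheap b hb e he f hfinc) (Finset.le_sup hfT.1)
  -- edges of SF b cost at most w b
  have hcost : ∀ b ∈ B, ∀ e ∈ SF b, c e ≤ w b := fun b hb e he =>
    le_trans (Finset.le_sup he) (hsupSF b hb)
  constructor
  · -- coverage
    intro b hb
    have hsub : inc J b ∪ SF b ⊆ inc (J ∪ F) b := by
      intro e he
      rw [Finset.mem_union] at he
      simp only [inc, Finset.mem_filter, Finset.mem_union] at *
      rcases he with h | h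
      · exact ⟨Or.inl h.1, h.2⟩
      · obtain ⟨heE, _, hbe⟩ := hSE b hb e h
        refine ⟨Or.inr ?_, hbe⟩
        rw [hF, Finset.mem_biUnion]; exact ⟨b, hb, h⟩
    have hdisj2 : Disjoint (inc J b) (SF b) := by
      rw [Finset.disjoint_left]
      intro e he hes
      have := (hSE b hb e hes).2.1
      simp only [inc, Finset.mem_filter] at he
      exact this he.1
    have hcard := Finset.card_le_card hsub
    rw [Finset.card_union_of_disjoint hdisj2, hScard b hb] at hcard
    unfold deg at *
    omega
  · intro I hIE hIcov
    -- w b ≤ pw c I b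
    have hwI : ∀ b ∈ B, w b ≤ pw c I b := by
      intro b hb
      rw [hw b hb]
      obtain ⟨T, hTsub, hTcard⟩ := Finset.exists_subset_card_eq (hIcov b hb)
      have hTE : T ⊆ inc E b := hTsub.trans (Finset.filter_subset_filter _ hIE)
      exact le_trans
        (Finset.inf'_le _ (Finset.mem_powersetCard.mpr ⟨hTE, hTcard⟩))
        (Finset.sup_mono hTsub)
    have hBsum : ∑ b ∈ B, pw c I b ≤ ∑ v, pw c I v :=
      Finset.sum_le_sum_of_subset (Finset.subset_univ B)
    refine ⟨?_, ?_, ?_⟩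
    · -- p_F(B) ≤ opt
      refine le_trans (Finset.sum_le_sum fun b hb => ?_) hBsum
      show pw c F b ≤ pw c I b
      unfold pw
      rw [hFb b hb]
      exact le_trans (hsupSF b hb) (hwI b hb)
    · -- p_F(A) ≤ R_J
      have h1 : ∑ a ∈ A, pw c F a ≤ ∑ a ∈ A, ∑ e ∈ inc F a, c e := by
        apply Finset.sum_le_sum
        intro a _
        exact Finset.sup_le fun e he => Finset.single_le_sum (fun _ _ => zero_le) he
      have hdisjA : ∀ a₁ ∈ A, ∀ a₂ ∈ A, a₁ ≠ a₂ → Disjoint (inc F a₁) (inc F a₂) := by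
        intro a₁ h₁ a₂ h₂ hne12
        rw [Finset.disjoint_left]
        intro e he1 he2
        simp only [inc, Finset.mem_filter] at he1 he2
        exact hne12 (hAend e (hFE he1.1) a₁ h₁ a₂ h₂ he1.2 he2.2)
      have h2 : ∑ a ∈ A, ∑ e ∈ inc F a, c e = ∑ e ∈ A.biUnion (inc F), c e :=
        (Finset.sum_biUnion hdisjA).symm
      have h3 : ∑ e ∈ A.biUnion (inc F), c e ≤ ∑ e ∈ F, c e := by
        apply Finset.sum_le_sum_of_subset
        intro e he
        rw [Finset.mem_biUnion] at he
        obtain ⟨a, _, he⟩ := he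
        exact Finset.mem_filter.mp he |>.1
      have hdisjB : ∀ b₁ ∈ B, ∀ b₂ ∈ B, b₁ ≠ b₂ → Disjoint (SF b₁) (SF b₂) := by
        intro b₁ h₁ b₂ h₂ hne12
        rw [Finset.disjoint_left]
        intro e he1 he2
        obtain ⟨heE, _, hb1⟩ := hSE b₁ h₁ e he1
        obtain ⟨_, _, hb2⟩ := hSE b₂ h₂ e he2
        exact hne12 (hBend e heE b₁ h₁ b₂ h₂ hb1 hb2)
      have h4 : ∑ e ∈ F, c e = ∑ b ∈ B, ∑ e ∈ SF b, c e := by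
        rw [hF]; exact Finset.sum_biUnion hdisjB
      have h5 : ∀ b ∈ B, ∑ e ∈ SF b, c e ≤ w b * ((r b - deg J b : ℕ) : NNReal) := by
        intro b hb
        calc ∑ e ∈ SF b, c e ≤ ∑ _e ∈ SF b, w b := Finset.sum_le_sum fun e he => hcost b hb e he
          _ = (SF b).card • w b := (Finset.sum_const _)
          _ = ((SF b).card : NNReal) * w b := nsmul_eq_mul _ _
          _ = w b * ((r b - deg J b : ℕ) : NNReal) := by rw [hScard b hb, mul_comm]
      calc ∑ a ∈ A, pw c F a ≤ ∑ a ∈ A, ∑ e ∈ inc F a, c e := h1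
        _ = ∑ e ∈ A.biUnion (inc F), c e := h2
        _ ≤ ∑ e ∈ F, c e := h3
        _ = ∑ b ∈ B, ∑ e ∈ SF b, c e := h4
        _ ≤ ∑ b ∈ B, w b * ((r b - deg J b : ℕ) : NNReal) := Finset.sum_le_sum h5
    · -- R_J ≤ k·opt
      have h1 : ∀ b ∈ B, w b * ((r b - deg J b : ℕ) : NNReal) ≤ pw c I b * (k : NNReal) := by
        intro b hb
        apply mul_le_mul' (hwI b hb)
        rw [Nat.cast_le]
        calc r b - deg J b ≤ r b := Nat.sub_le _ _
          _ ≤ k := hk ▸ Finset.le_sup (Finset.mem_univ b)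
      calc ∑ b ∈ B, w b * ((r b - deg J b : ℕ) : NNReal)
          ≤ ∑ b ∈ B, pw c I b * (k : NNReal) := Finset.sum_le_sum h1
        _ = (k : NNReal) * ∑ b ∈ B, pw c I b := by rw [← Finset.sum_mul, mul_comm]
        _ ≤ (k : NNReal) * ∑ v, pw c I v := mul_le_mul_right hBsum _
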